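/- arXiv:2107.03254 — 3 statements merged into one kernel-verified Lean document; each statement's English description precedes it below -/
import Mathlib

section
/- Let n ≥ 2 be an integer, let s ∈ (1/2, 1) and let T > 0. There exists a constant C > 0, depending only on n, s and T, such that for every h > 0 and every t ∈ (0, T] one has ∫_0^t (t − τ) / ((t − τ)^{(n+2s)/(2s)} + h^{n+2s}) dτ ≤ C · min{h^{−n−2s}, h^{−n+2s}}. -/
open MeasureTheory

/-- Kernel estimate in time: for `n ≥ 2`, `s ∈ (1/2, 1)`, `T > 0`, there is
`C > 0` (depending only on `n, s, T`) such that for every `h > 0` and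
`t ∈ (0, T]`,
`∫_0^t (t−τ)/((t−τ)^{(n+2s)/(2s)} + h^{n+2s}) dτ ≤ C min{h^{−n−2s}, h^{−n+2s}}`. -/
theorem kernel_time_integral_bound (n : ℕ) (hn : 2 ≤ n) (s : ℝ)
    (hs : 1 / 2 < s) (hs1 : s < 1) (T : ℝ) (hT : 0 < T) :
    ∃ C : ℝ, 0 < C ∧ ∀ h : ℝ, 0 < h → ∀ t : ℝ, 0 < t → t ≤ T →
      (∫ τ in Set.Ioo (0 : ℝ) t,
          (t - τ) / ((t - τ) ^ (((n : ℝ) + 2 * s) / (2 * s)) + h ^ ((n : ℝ) + 2 * s)))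
        ≤ C * min (h ^ (-(n : ℝ) - 2 * s)) (h ^ (-(n : ℝ) + 2 * s)) := by
  have hs0 : (0:ℝ) < s := by linarith
  have h2s : (0:ℝ) < 2 * s := by linarith
  have hn2 : (2:ℝ) ≤ (n:ℝ) := by exact_mod_cast hn
  set p : ℝ := ((n : ℝ) + 2 * s) / (2 * s) with hp_def
  set q : ℝ := (n : ℝ) + 2 * s with hq_def
  have hq0 : 0 < q := by rw [hq_def]; linarith
  have hp2 : 2 < p := by
    rw [hp_def, lt_div_iff₀ h2s]; linarith
  have hp0 : 0 < p := by linarith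
  have hpq : 2 * s * p = q := by
    rw [hp_def]; field_simp
  set C : ℝ := T ^ 2 / 2 + 1 / 2 + 1 / (p - 2) with hC_def
  have hC : 0 < C := by
    have h1 : (0:ℝ) < 1 / (p - 2) := by
      apply one_div_pos.mpr; linarith
    have h2 : (0:ℝ) ≤ T ^ 2 / 2 := by positivity
    rw [hC_def]; linarith
  refine ⟨C, hC, ?_⟩
  intro h hh t ht htT
  set g : ℝ → ℝ := fun u => u / (u ^ p + h ^ q) with hg_def
  have hhq : 0 < h ^ q := Real.rpow_pos_of_pos hh q
  -- continuity of g on [0, ∞)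
  have hcont_rpow : Continuous fun x : ℝ => x ^ p := Real.continuous_rpow_const hp0.le
  have hdenom_pos : ∀ x : ℝ, 0 ≤ x → 0 < x ^ p + h ^ q := by
    intro x hx
    have := Real.rpow_nonneg hx p
    linarith
  have hgcont : ContinuousOn g (Set.Ici (0:ℝ)) := by
    apply ContinuousOn.div continuousOn_id
      ((hcont_rpow.add continuous_const).continuousOn)
    intro x hx
    exact ne_of_gt (hdenom_pos x hx)
  have hgi : ∀ a b : ℝ, 0 ≤ a → a ≤ b → IntervalIntegrable g volume a b := by
    intro a b ha hab
    apply ContinuousOn.intervalIntegrable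
    rw [Set.uIcc_of_le hab]
    exact hgcont.mono (fun x hx => le_trans ha hx.1)
  -- the substituted form
  have hsub : (∫ τ in Set.Ioo (0 : ℝ) t, (t - τ) / ((t - τ) ^ p + h ^ q))
      = ∫ u in (0:ℝ)..t, g u := by
    rw [← MeasureTheory.integral_Ioc_eq_integral_Ioo,
      ← intervalIntegral.integral_of_le ht.le]
    have h0 := intervalIntegral.integral_comp_sub_left (a := 0) (b := t) g t
    rw [sub_zero, sub_self] at h0
    exact h0
  -- Bound 1 : ∫_0^b g ≤ b^2/2 / h^q
  have hB1 : ∀ b : ℝ, 0 ≤ b → (∫ x in (0:ℝ)..b, g x) ≤ b ^ 2 / 2 / h ^ q := by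
    intro b hb
    have h1 : (∫ x in (0:ℝ)..b, g x) ≤ ∫ x in (0:ℝ)..b, x / h ^ q := by
      apply intervalIntegral.integral_mono_on hb (hgi 0 b le_rfl hb)
      · exact (continuous_id.div_const (h ^ q)).intervalIntegrable 0 b
      · intro x hx
        have hx0 : 0 ≤ x := hx.1
        rw [hg_def]
        apply div_le_div_of_nonneg_left hx0 hhq
        have := Real.rpow_nonneg hx0 p
        linarith
    have h2 : (∫ x in (0:ℝ)..b, x / h ^ q) = b ^ 2 / 2 / h ^ q := by
      rw [intervalIntegral.integral_div, integral_id]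
      ring
    linarith [h1, h2.le]
  rw [hsub]
  -- positivity of the two rpow bounds
  have hA : 0 < h ^ (-(n : ℝ) - 2 * s) := Real.rpow_pos_of_pos hh _
  have hB : 0 < h ^ (-(n : ℝ) + 2 * s) := Real.rpow_pos_of_pos hh _
  rw [mul_min_of_nonneg _ _ hC.le]
  apply le_min
  · -- bound by C * h^(-q)
    have e1 : h ^ (-(n : ℝ) - 2 * s) = (h ^ q)⁻¹ := by
      rw [show -(n:ℝ) - 2 * s = -q by rw [hq_def]; ring, Real.rpow_neg hh.le]
    calc (∫ x in (0:ℝ)..t, g x) ≤ t ^ 2 / 2 / h ^ q := hB1 t ht.le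
      _ ≤ T ^ 2 / 2 / h ^ q := by
          apply div_le_div_of_nonneg_right ?_ hhq.le
          nlinarith
      _ = T ^ 2 / 2 * (h ^ q)⁻¹ := by ring
      _ ≤ C * (h ^ q)⁻¹ := by
          apply mul_le_mul_of_nonneg_right ?_ (inv_nonneg.mpr hhq.le)
          have h1 : (0:ℝ) < 1 / (p - 2) := by apply one_div_pos.mpr; linarith
          rw [hC_def]; linarith
      _ = C * h ^ (-(n : ℝ) - 2 * s) := by rw [e1]
  · -- bound by C * h^(-n+2s)
    set a : ℝ := h ^ (2 * s) with ha_def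
    have ha0 : 0 < a := Real.rpow_pos_of_pos hh _
    have haB : a ^ 2 / 2 / h ^ q = 1 / 2 * h ^ (-(n : ℝ) + 2 * s) := by
      rw [ha_def, sq, ← Real.rpow_add hh,
        show 2 * s + 2 * s = (-(n:ℝ) + 2 * s) + q by rw [hq_def]; ring,
        Real.rpow_add hh]
      field_simp
    have haP : a ^ (2 - p) = h ^ (-(n : ℝ) + 2 * s) := by
      rw [ha_def, ← Real.rpow_mul hh.le]
      congr 1
      rw [show 2 * s * (2 - p) = 4 * s - 2 * s * p by ring, hpq, hq_def]
      ring
    rcases le_or_gt t a with hta | hat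
    · -- t ≤ a : crude bound suffices
      calc (∫ x in (0:ℝ)..t, g x) ≤ t ^ 2 / 2 / h ^ q := hB1 t ht.le
        _ ≤ a ^ 2 / 2 / h ^ q := by
            apply div_le_div_of_nonneg_right ?_ hhq.le
            nlinarith
        _ = 1 / 2 * h ^ (-(n : ℝ) + 2 * s) := haB
        _ ≤ C * h ^ (-(n : ℝ) + 2 * s) := by
            apply mul_le_mul_of_nonneg_right ?_ hB.le
            have h1 : (0:ℝ) < 1 / (p - 2) := by apply one_div_pos.mpr; linarith
            have h2 : (0:ℝ) ≤ T ^ 2 / 2 := by positivity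
            rw [hC_def]; linarith
    · -- a < t : split the integral at a
      have hsplit : (∫ x in (0:ℝ)..t, g x)
          = (∫ x in (0:ℝ)..a, g x) + ∫ x in a..t, g x :=
        (intervalIntegral.integral_add_adjacent_intervals
          (hgi 0 a le_rfl ha0.le) (hgi a t ha0.le hat.le)).symm
      have hrint : IntervalIntegrable (fun x : ℝ => x ^ (1 - p)) volume a t := by
        apply ContinuousOn.intervalIntegrable
        rw [Set.uIcc_of_le hat.le]
        intro x hx
        exact (Real.continuousAt_rpow_const x (1 - p)
          (Or.inl (ne_of_gt (lt_of_lt_of_le ha0 hx.1)))).continuousWithinAt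
      have htail : (∫ x in a..t, g x) ≤ ∫ x in a..t, x ^ (1 - p) := by
        apply intervalIntegral.integral_mono_on hat.le (hgi a t ha0.le hat.le) hrint
        intro x hx
        have hx0 : 0 < x := lt_of_lt_of_le ha0 hx.1
        have hxp : 0 < x ^ p := Real.rpow_pos_of_pos hx0 p
        rw [hg_def]
        calc x / (x ^ p + h ^ q) ≤ x / x ^ p := by
              apply div_le_div_of_nonneg_left hx0.le hxp
              linarith
          _ = x ^ (1 - p) := by
              rw [Real.rpow_sub hx0, Real.rpow_one]
      have hval : (∫ x in a..t, x ^ (1 - p)) = (t ^ (2 - p) - a ^ (2 - p)) / (2 - p) := by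
        rw [integral_rpow, show (1:ℝ) - p + 1 = 2 - p by ring]
        refine Or.inr ⟨by intro hc; linarith, ?_⟩
        rw [Set.uIcc_of_le hat.le]
        intro hc
        exact absurd hc.1 (not_le.mpr ha0)
      have htp : 0 < t ^ (2 - p) := Real.rpow_pos_of_pos ht _
      have hval2 : (t ^ (2 - p) - a ^ (2 - p)) / (2 - p) ≤ a ^ (2 - p) / (p - 2) := by
        have he : (t ^ (2 - p) - a ^ (2 - p)) / (2 - p)
            = (a ^ (2 - p) - t ^ (2 - p)) / (p - 2) := by
          rw [div_eq_div_iff (show (2:ℝ) - p ≠ 0 by intro hc; linarith)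
            (show p - 2 ≠ 0 by intro hc; linarith)]
          ring
        rw [he]
        apply div_le_div_of_nonneg_right ?_ (by linarith : (0:ℝ) ≤ p - 2)
        linarith
      calc (∫ x in (0:ℝ)..t, g x)
          = (∫ x in (0:ℝ)..a, g x) + ∫ x in a..t, g x := hsplit
        _ ≤ a ^ 2 / 2 / h ^ q + a ^ (2 - p) / (p - 2) := by
            have := hB1 a ha0.le
            have h2 : (∫ x in a..t, g x) ≤ a ^ (2 - p) / (p - 2) := by
              calc (∫ x in a..t, g x) ≤ ∫ x in a..t, x ^ (1 - p) := htail
                _ = (t ^ (2 - p) - a ^ (2 - p)) / (2 - p) := hval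
                _ ≤ a ^ (2 - p) / (p - 2) := hval2
            linarith
        _ = (1 / 2 + 1 / (p - 2)) * h ^ (-(n : ℝ) + 2 * s) := by
            rw [haB, haP]; ring
        _ ≤ C * h ^ (-(n : ℝ) + 2 * s) := by
            apply mul_le_mul_of_nonneg_right ?_ hB.le
            have h2 : (0:ℝ) ≤ T ^ 2 / 2 := by positivity
            rw [hC_def]; linarith
end

section
/- Let n ≥ 2 be an integer and let s ∈ (1/2, 1). There exists a constant C > 0, depending only on n and s, such that for all x, z ∈ ℝⁿ with 0 < ‖x − z‖ ≤ 1/2, one has ∫_{{y ∈ ℝⁿ : ‖x − y‖ ≥ 2‖x − z‖}} ‖x − z‖ · ‖x − y‖^{−2} · min{‖x − y‖^{−n−2s}, ‖x − y‖^{−n+2s}} dy ≤ C ‖x − z‖^{2s−1} (1 + |log ‖x − z‖|). -/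
open MeasureTheory


open MeasureTheory Set Metric

private lemma aux_meas (n : ℕ) (c : ℝ) :
    MeasurableSet {v : EuclideanSpace ℝ (Fin n) | c ≤ ‖v‖} :=
  (isClosed_le continuous_const continuous_norm).measurableSet

private lemma aux_integrable (n : ℕ) {p : ℝ} (hp : p < -(n : ℝ)) {c : ℝ} (hc : 0 < c) :
    IntegrableOn (fun v : EuclideanSpace ℝ (Fin n) => ‖v‖ ^ p) {v | c ≤ ‖v‖} := by
  have hp0 : p < 0 := lt_of_lt_of_le hp (neg_nonpos.mpr (Nat.cast_nonneg n))
  have hfin : (Module.finrank ℝ (EuclideanSpace ℝ (Fin n)) : ℝ) < -p := by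
    rw [finrank_euclideanSpace_fin]; linarith
  have hint : Integrable (fun v : EuclideanSpace ℝ (Fin n) =>
      (1 + 1/c) ^ (-p) * (1 + ‖v‖) ^ (-(-p))) volume :=
    (integrable_one_add_norm hfin).const_mul _
  simp only [neg_neg] at hint
  refine Integrable.mono hint.restrict ?_ ?_
  · exact (Measurable.aestronglyMeasurable (by fun_prop))
  · filter_upwards [ae_restrict_mem (aux_meas n c)] with v hv
    have hv0 : (0:ℝ) < ‖v‖ := hc.trans_le hv
    have h1 : (1 + ‖v‖) / (1 + 1/c) ≤ ‖v‖ := by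
      rw [div_le_iff₀ (by positivity)]
      have h01 : (1:ℝ) ≤ ‖v‖ / c := (one_le_div hc).2 hv
      have : (1:ℝ) + ‖v‖ ≤ ‖v‖/c + ‖v‖ := by linarith
      calc (1:ℝ) + ‖v‖ ≤ ‖v‖/c + ‖v‖ := this
        _ = ‖v‖ * (1 + 1/c) := by field_simp; ring
    have h2 : ‖v‖ ^ p ≤ ((1 + ‖v‖) / (1 + 1/c)) ^ p :=
      Real.rpow_le_rpow_of_nonpos (by positivity) h1 hp0.le
    have h3 : ((1 + ‖v‖) / (1 + 1/c)) ^ p = (1 + 1/c)^(-p) * (1 + ‖v‖) ^ p := by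
      rw [Real.div_rpow (by positivity) (by positivity), div_eq_mul_inv,
        ← Real.rpow_neg (by positivity), mul_comm]
    rw [Real.norm_eq_abs, Real.norm_eq_abs, abs_of_nonneg (Real.rpow_nonneg (norm_nonneg v) p),
      abs_of_nonneg (by positivity)]
    calc ‖v‖^p ≤ ((1 + ‖v‖) / (1 + 1/c)) ^ p := h2
      _ = _ := h3

private lemma aux_integral (n : ℕ) (hn : 2 ≤ n) {p : ℝ} (hp : p < -(n : ℝ)) {c : ℝ} (hc : 0 < c) :
    ∫ v in {v : EuclideanSpace ℝ (Fin n) | c ≤ ‖v‖}, ‖v‖ ^ p =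
      (n : ℝ) * (volume (ball (0 : EuclideanSpace ℝ (Fin n)) 1)).toReal *
        (-c ^ ((n : ℝ) + p) / ((n : ℝ) + p)) := by
  have hn1 : (1:ℝ) ≤ (n:ℝ) := by exact_mod_cast le_trans one_le_two hn
  rw [← integral_indicator (aux_meas n c)]
  have hfun : (fun v : EuclideanSpace ℝ (Fin n) =>
      ({v : EuclideanSpace ℝ (Fin n) | c ≤ ‖v‖}).indicator (fun v => ‖v‖ ^ p) v)
      = fun v => (Ici c).indicator (fun r => r ^ p) ‖v‖ := by
    ext v; by_cases hv : c ≤ ‖v‖ <;> simp [Set.indicator, hv]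
  have hdim' : Module.finrank ℝ (EuclideanSpace ℝ (Fin n)) = n := finrank_euclideanSpace_fin
  haveI : Nontrivial (EuclideanSpace ℝ (Fin n)) := by
    refine Module.nontrivial_of_finrank_pos (R := ℝ) (?_ : 0 < Module.finrank ℝ (EuclideanSpace ℝ (Fin n)))
    rw [hdim']; omega
  rw [hfun, integral_fun_norm_addHaar volume ((Ici c).indicator (fun r => r ^ p))]
  have hdim : Module.finrank ℝ (EuclideanSpace ℝ (Fin n)) = n := finrank_euclideanSpace_fin
  have h1d : (∫ y in Ioi (0:ℝ), y ^ (n - 1) • (Ici c).indicator (fun r => r ^ p) y)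
      = -c ^ ((n:ℝ) + p) / ((n:ℝ) + p) := by
    have hcg : ∀ y ∈ Ioi (0:ℝ), y ^ (n-1) • (Ici c).indicator (fun r => r ^ p) y
        = (Ici c).indicator (fun y => y ^ ((n:ℝ) - 1 + p)) y := by
      intro y hy
      by_cases hcy : y ∈ Ici c
      · simp only [Set.indicator_of_mem hcy, smul_eq_mul]
        rw [← Real.rpow_natCast y (n-1), ← Real.rpow_add hy]
        congr 1
        have : ((n - 1 : ℕ) : ℝ) = (n:ℝ) - 1 := by
          push_cast [Nat.cast_sub (le_trans one_le_two hn)]; ring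
        rw [this]
      · simp [Set.indicator_of_notMem hcy]
    rw [setIntegral_congr_fun measurableSet_Ioi hcg, integral_indicator measurableSet_Ici,
      Measure.restrict_restrict measurableSet_Ici,
      show Ici c ∩ Ioi (0:ℝ) = Ici c by
        ext y; simp only [Set.mem_inter_iff, Set.mem_Ici, Set.mem_Ioi, and_iff_left_iff_imp]
        intro hy; linarith,
      integral_Ici_eq_integral_Ioi,
      integral_Ioi_rpow_of_lt (by linarith : (n:ℝ) - 1 + p < -1) hc]
    ring_nf
  rw [hdim, h1d, nsmul_eq_mul, smul_eq_mul]
  rw [measureReal_def]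
  ring

/-- For `n ≥ 2`, `s ∈ (1/2, 1)`, there is `C > 0` (depending only on `n, s`)
such that for all `x, z ∈ ℝⁿ` with `0 < ‖x − z‖ ≤ 1/2`,
`∫_{‖x−y‖ ≥ 2‖x−z‖} ‖x−z‖ ‖x−y‖^{−2} min{‖x−y‖^{−n−2s}, ‖x−y‖^{−n+2s}} dy
  ≤ C ‖x−z‖^{2s−1} (1 + |log ‖x−z‖|)`. -/
theorem gradient_kernel_difference_bound (n : ℕ) (hn : 2 ≤ n) (s : ℝ)
    (hs : 1 / 2 < s) (hs1 : s < 1) :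
    ∃ C : ℝ, 0 < C ∧ ∀ x z : EuclideanSpace ℝ (Fin n),
      0 < ‖x - z‖ → ‖x - z‖ ≤ 1 / 2 →
      (∫ y in {y : EuclideanSpace ℝ (Fin n) | 2 * ‖x - z‖ ≤ ‖x - y‖},
          ‖x - z‖ * ‖x - y‖ ^ (-2 : ℝ) *
            min (‖x - y‖ ^ (-(n : ℝ) - 2 * s)) (‖x - y‖ ^ (-(n : ℝ) + 2 * s)))
        ≤ C * ‖x - z‖ ^ (2 * s - 1) * (1 + |Real.log ‖x - z‖|) := by
  have hvol : (0:ℝ) ≤ (volume (ball (0 : EuclideanSpace ℝ (Fin n)) 1)).toReal :=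
    ENNReal.toReal_nonneg
  have hs2 : (0:ℝ) < 2 - 2*s := by linarith
  have hne1 : (2*s - 2 : ℝ) ≠ 0 := by intro hx; linarith
  have hne2 : (2 - 2*s : ℝ) ≠ 0 := ne_of_gt hs2
  set C0 : ℝ := (n : ℝ) * (volume (ball (0 : EuclideanSpace ℝ (Fin n)) 1)).toReal *
      ((2:ℝ) ^ (2*s - 2) / (2 - 2*s)) with hC0
  have hC0nonneg : 0 ≤ C0 :=
    mul_nonneg (mul_nonneg (Nat.cast_nonneg n) hvol)
      (div_nonneg (Real.rpow_nonneg (by norm_num) _) hs2.le)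
  refine ⟨C0 + 1, by positivity, ?_⟩
  intro x z hxz hxz2
  set h := ‖x - z‖ with hh
  set p : ℝ := 2*s - 2 - n with hpdef
  have hp : p < -(n:ℝ) := by rw [hpdef]; linarith
  have hc : 0 < 2*h := by positivity
  set S := {y : EuclideanSpace ℝ (Fin n) | 2 * h ≤ ‖x - y‖} with hSdef
  have hSmeas : MeasurableSet S :=
    (isClosed_le continuous_const ((continuous_const.sub continuous_id).norm)).measurableSet
  set S' := {v : EuclideanSpace ℝ (Fin n) | 2*h ≤ ‖v‖} with hS'def
  have hS'meas := aux_meas n (2*h)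
  have hFint : Integrable (S'.indicator fun v => h * ‖v‖ ^ p) volume := by
    rw [integrable_indicator_iff hS'meas]
    exact (aux_integrable n hp hc).const_mul h
  have hcomp : Integrable (fun y => S'.indicator (fun v => h * ‖v‖ ^ p) (x - y)) volume :=
    hFint.comp_sub_left x
  have key : (∫ y in S, h * ‖x - y‖ ^ (-2:ℝ) *
        min (‖x - y‖ ^ (-(n : ℝ) - 2 * s)) (‖x - y‖ ^ (-(n : ℝ) + 2 * s)))
      ≤ ∫ y, S'.indicator (fun v => h * ‖v‖ ^ p) (x - y) := by
    rw [← integral_indicator hSmeas]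
    refine integral_mono_of_nonneg (Filter.Eventually.of_forall ?_) hcomp
      (Filter.Eventually.of_forall ?_)
    · intro y
      refine Set.indicator_nonneg (fun y _ => ?_) y
      exact mul_nonneg (mul_nonneg (norm_nonneg _) (Real.rpow_nonneg (norm_nonneg _) _))
        (le_min (Real.rpow_nonneg (norm_nonneg _) _) (Real.rpow_nonneg (norm_nonneg _) _))
    · intro y
      by_cases hy : y ∈ S
      · rw [Set.indicator_of_mem hy]
        have hxy : 2*h ≤ ‖x - y‖ := hy
        have hmem : x - y ∈ S' := hxy
        show _ ≤ S'.indicator (fun v => h * ‖v‖ ^ p) (x - y)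
        rw [Set.indicator_of_mem hmem]
        have hr : (0:ℝ) < ‖x - y‖ := lt_of_lt_of_le hc hxy
        have hmin : min (‖x - y‖ ^ (-(n : ℝ) - 2 * s)) (‖x - y‖ ^ (-(n : ℝ) + 2 * s))
            ≤ ‖x - y‖ ^ (-(n : ℝ) + 2 * s) := min_le_right _ _
        have hmul : ‖x - y‖ ^ (-2:ℝ) * ‖x - y‖ ^ (-(n : ℝ) + 2 * s) = ‖x - y‖ ^ p := by
          rw [← Real.rpow_add hr]; congr 1; rw [hpdef]; ring
        calc h * ‖x - y‖ ^ (-2:ℝ) *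
              min (‖x - y‖ ^ (-(n : ℝ) - 2 * s)) (‖x - y‖ ^ (-(n : ℝ) + 2 * s))
            ≤ h * ‖x - y‖ ^ (-2:ℝ) * (‖x - y‖ ^ (-(n:ℝ)+2*s)) :=
              mul_le_mul_of_nonneg_left hmin (by positivity)
          _ = h * ‖x - y‖ ^ p := by rw [mul_assoc, hmul]
      · rw [Set.indicator_of_notMem hy]
        exact Set.indicator_nonneg (fun v _ => by positivity) _
  have hval : (∫ y, S'.indicator (fun v => h * ‖v‖ ^ p) (x - y)) = C0 * h ^ (2*s - 1) := by
    rw [integral_sub_left_eq_self (S'.indicator fun v => h * ‖v‖ ^ p) volume x,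
      integral_indicator hS'meas, integral_const_mul, aux_integral n hn hp hc]
    have hnp : (n:ℝ) + p = 2*s - 2 := by rw [hpdef]; ring
    rw [hnp]
    have h2h : (2*h) ^ (2*s-2) = 2^(2*s-2) * h^(2*s-2) := Real.mul_rpow (by norm_num) hxz.le
    have hpow : h * h ^ (2*s-2) = h ^ (2*s-1) := by
      nth_rewrite 1 [← Real.rpow_one h]
      rw [← Real.rpow_add hxz]
      congr 1; ring
    have expand : h * ((n:ℝ) * (volume (ball (0 : EuclideanSpace ℝ (Fin n)) 1)).toReal *
          (-(2*h)^(2*s-2)/(2*s-2)))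
        = C0 * (h * h^(2*s-2)) := by
      rw [h2h, hC0, show (2 - 2*s : ℝ) = -(2*s - 2) by ring, div_neg]; ring
    rw [expand, hpow]
  calc (∫ y in S, h * ‖x - y‖ ^ (-2:ℝ) *
        min (‖x - y‖ ^ (-(n : ℝ) - 2 * s)) (‖x - y‖ ^ (-(n : ℝ) + 2 * s)))
      ≤ ∫ y, S'.indicator (fun v => h * ‖v‖ ^ p) (x - y) := key
    _ = C0 * h ^ (2*s - 1) := hval
    _ ≤ (C0 + 1) * h ^ (2*s - 1) * (1 + |Real.log h|) := by
        have hpow2 : 0 < h ^ (2*s-1) := Real.rpow_pos_of_pos hxz _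
        have habs : (1:ℝ) ≤ 1 + |Real.log h| := le_add_of_nonneg_right (abs_nonneg _)
        calc C0 * h^(2*s-1) ≤ (C0+1) * h^(2*s-1) := by nlinarith
          _ = (C0+1) * h^(2*s-1) * 1 := (mul_one _).symm
          _ ≤ (C0+1) * h^(2*s-1) * (1 + |Real.log h|) :=
              mul_le_mul_of_nonneg_left habs (by positivity)
end

section
/- Let s ∈ (0, 1) and set a = 1 − 2s. Define H : ℝ × (0, ∞) → ℝ by H(x, y) = (√(x² + y²) − x)^{1−s}. Then for all x ∈ ℝ and y > 0 one has ∂²_x H(x,y) + ∂²_y H(x,y) − (a/y) ∂_y H(x,y) = 0; equivalently, L_{−a} H = 0 on the upper half-plane. -/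
open MeasureTheory

/-- `H(x,y) = (√(x² + y²) − x)^{1−s}`. -/
noncomputable def H (s x y : ℝ) : ℝ := (Real.sqrt (x ^ 2 + y ^ 2) - x) ^ (1 - s)

lemma sqrt_sub_pos' (b c : ℝ) (hc : c ≠ 0) : 0 < Real.sqrt (b ^ 2 + c ^ 2) - b := by
  have h1 : |b| < Real.sqrt (b ^ 2 + c ^ 2) := by
    rw [← Real.sqrt_sq_eq_abs]
    exact Real.sqrt_lt_sqrt (sq_nonneg b) (by nlinarith [sq_nonneg c, sq_abs c, abs_pos.mpr hc, mul_pos (abs_pos.mpr hc) (abs_pos.mpr hc)])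
  linarith [le_abs_self b]

lemma sqrt_pos' (b c : ℝ) (hc : c ≠ 0) : 0 < b ^ 2 + c ^ 2 := by
  have : 0 < c ^ 2 := by positivity
  nlinarith [sq_nonneg b]

lemma hasDerivAt_sqrt_left (y t : ℝ) (hy : y ≠ 0) :
    HasDerivAt (fun u : ℝ => Real.sqrt (u ^ 2 + y ^ 2))
      (t / Real.sqrt (t ^ 2 + y ^ 2)) t := by
  have h0 : 0 < t ^ 2 + y ^ 2 := sqrt_pos' t y hy
  have hr : 0 < Real.sqrt (t ^ 2 + y ^ 2) := Real.sqrt_pos.mpr h0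
  have h1 : HasDerivAt (fun u : ℝ => u ^ 2 + y ^ 2) (2 * t) t := by
    simpa using (hasDerivAt_pow 2 t).add_const (y ^ 2)
  have h2 := h1.sqrt h0.ne'
  convert h2 using 1
  field_simp

lemma hasDerivAt_sqrt_right (x u : ℝ) (hu : u ≠ 0) :
    HasDerivAt (fun v : ℝ => Real.sqrt (x ^ 2 + v ^ 2))
      (u / Real.sqrt (x ^ 2 + u ^ 2)) u := by
  have h0 : 0 < x ^ 2 + u ^ 2 := sqrt_pos' x u hu
  have hr : 0 < Real.sqrt (x ^ 2 + u ^ 2) := Real.sqrt_pos.mpr h0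
  have h1 : HasDerivAt (fun v : ℝ => x ^ 2 + v ^ 2) (2 * u) u := by
    simpa using (hasDerivAt_pow 2 u).const_add (x ^ 2)
  have h2 := h1.sqrt h0.ne'
  convert h2 using 1
  field_simp

lemma hasDerivAt_H_x (s y : ℝ) (hy : 0 < y) (t : ℝ) :
    HasDerivAt (fun t : ℝ => H s t y)
      ((1 - s) * ((Real.sqrt (t ^ 2 + y ^ 2) - t) ^ (-s) *
        (t / Real.sqrt (t ^ 2 + y ^ 2) - 1))) t := by
  have hg : 0 < Real.sqrt (t ^ 2 + y ^ 2) - t := sqrt_sub_pos' t y hy.ne'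
  have h3 : HasDerivAt (fun u : ℝ => Real.sqrt (u ^ 2 + y ^ 2) - u)
      (t / Real.sqrt (t ^ 2 + y ^ 2) - 1) t :=
    (hasDerivAt_sqrt_left y t hy.ne').sub (hasDerivAt_id t)
  have h4 := h3.rpow_const (p := 1 - s) (Or.inl hg.ne')
  have he : (1 : ℝ) - s - 1 = -s := by ring
  unfold H
  convert h4 using 1
  rw [he]
  ring

lemma hasDerivAt_H_y (s x : ℝ) (u : ℝ) (hu : 0 < u) :
    HasDerivAt (fun v : ℝ => H s x v)
      ((1 - s) * ((Real.sqrt (x ^ 2 + u ^ 2) - x) ^ (-s) *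
        (u / Real.sqrt (x ^ 2 + u ^ 2)))) u := by
  have hg : 0 < Real.sqrt (x ^ 2 + u ^ 2) - x := sqrt_sub_pos' x u hu.ne'
  have h3 : HasDerivAt (fun v : ℝ => Real.sqrt (x ^ 2 + v ^ 2) - x)
      (u / Real.sqrt (x ^ 2 + u ^ 2)) u :=
    (hasDerivAt_sqrt_right x u hu.ne').sub_const x
  have h4 := h3.rpow_const (p := 1 - s) (Or.inl hg.ne')
  have he : (1 : ℝ) - s - 1 = -s := by ring
  unfold H
  convert h4 using 1
  rw [he]
  ring

lemma hasDerivAt_Fx (s y : ℝ) (hy : 0 < y) (x : ℝ) :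
    HasDerivAt (fun t : ℝ => (1 - s) * ((Real.sqrt (t ^ 2 + y ^ 2) - t) ^ (-s) *
        (t / Real.sqrt (t ^ 2 + y ^ 2) - 1)))
      ((1 - s) * (((x / Real.sqrt (x ^ 2 + y ^ 2) - 1) * -s * (Real.sqrt (x ^ 2 + y ^ 2) - x) ^ (-s - 1)) * (x / Real.sqrt (x ^ 2 + y ^ 2) - 1)
        + (Real.sqrt (x ^ 2 + y ^ 2) - x) ^ (-s) *
          ((1 * Real.sqrt (x ^ 2 + y ^ 2) - x * (x / Real.sqrt (x ^ 2 + y ^ 2))) /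
            Real.sqrt (x ^ 2 + y ^ 2) ^ 2))) x := by
  have h0 : 0 < x ^ 2 + y ^ 2 := sqrt_pos' x y hy.ne'
  have hr : 0 < Real.sqrt (x ^ 2 + y ^ 2) := Real.sqrt_pos.mpr h0
  have hg : 0 < Real.sqrt (x ^ 2 + y ^ 2) - x := sqrt_sub_pos' x y hy.ne'
  have h3 : HasDerivAt (fun u : ℝ => Real.sqrt (u ^ 2 + y ^ 2) - u)
      (x / Real.sqrt (x ^ 2 + y ^ 2) - 1) x :=
    (hasDerivAt_sqrt_left y x hy.ne').sub (hasDerivAt_id x)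
  have hA := h3.rpow_const (p := -s) (Or.inl hg.ne')
  have hB : HasDerivAt (fun t : ℝ => t / Real.sqrt (t ^ 2 + y ^ 2) - 1)
      ((1 * Real.sqrt (x ^ 2 + y ^ 2) - x * (x / Real.sqrt (x ^ 2 + y ^ 2))) /
        Real.sqrt (x ^ 2 + y ^ 2) ^ 2) x :=
    ((hasDerivAt_id x).div (hasDerivAt_sqrt_left y x hy.ne') hr.ne').sub_const 1
  exact (hA.mul hB).const_mul (1 - s)

lemma hasDerivAt_Fy (s x y : ℝ) (hy : 0 < y) :
    HasDerivAt (fun u : ℝ => (1 - s) * ((Real.sqrt (x ^ 2 + u ^ 2) - x) ^ (-s) *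
        (u / Real.sqrt (x ^ 2 + u ^ 2))))
      ((1 - s) * (((y / Real.sqrt (x ^ 2 + y ^ 2)) * -s * (Real.sqrt (x ^ 2 + y ^ 2) - x) ^ (-s - 1)) * (y / Real.sqrt (x ^ 2 + y ^ 2))
        + (Real.sqrt (x ^ 2 + y ^ 2) - x) ^ (-s) *
          ((1 * Real.sqrt (x ^ 2 + y ^ 2) - y * (y / Real.sqrt (x ^ 2 + y ^ 2))) /
            Real.sqrt (x ^ 2 + y ^ 2) ^ 2))) y := by
  have h0 : 0 < x ^ 2 + y ^ 2 := sqrt_pos' x y hy.ne'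
  have hr : 0 < Real.sqrt (x ^ 2 + y ^ 2) := Real.sqrt_pos.mpr h0
  have hg : 0 < Real.sqrt (x ^ 2 + y ^ 2) - x := sqrt_sub_pos' x y hy.ne'
  have h3 : HasDerivAt (fun v : ℝ => Real.sqrt (x ^ 2 + v ^ 2) - x)
      (y / Real.sqrt (x ^ 2 + y ^ 2)) y :=
    (hasDerivAt_sqrt_right x y hy.ne').sub_const x
  have hA := h3.rpow_const (p := -s) (Or.inl hg.ne')
  have hB : HasDerivAt (fun u : ℝ => u / Real.sqrt (x ^ 2 + u ^ 2))
      ((1 * Real.sqrt (x ^ 2 + y ^ 2) - y * (y / Real.sqrt (x ^ 2 + y ^ 2))) /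
        Real.sqrt (x ^ 2 + y ^ 2) ^ 2) y :=
    (hasDerivAt_id y).div (hasDerivAt_sqrt_right x y hy.ne') hr.ne'
  exact (hA.mul hB).const_mul (1 - s)

lemma final_alg (s a P Q r x y : ℝ) (hr : 0 < r) (hy : 0 < y) (hg : 0 < r - x)
    (hPQ : Q * (r - x) = P) (hrsq : r ^ 2 = x ^ 2 + y ^ 2) (ha : a = 1 - 2 * s) :
    (1 - s) * (((x / r - 1) * -s * Q) * (x / r - 1) + P * ((1 * r - x * (x / r)) / r ^ 2))
      + (1 - s) * (((y / r) * -s * Q) * (y / r) + P * ((1 * r - y * (y / r)) / r ^ 2))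
      - (a / y) * ((1 - s) * (P * (y / r))) = 0 := by
  subst ha
  subst hPQ
  have hr' : r ≠ 0 := hr.ne'
  have hy' : y ≠ 0 := hy.ne'
  field_simp
  ring_nf
  linear_combination (s * Q * x - s ^ 2 * Q * r + Q * r - Q * x) * hrsq

/-- For `s ∈ (0,1)` and `a = 1 − 2s`, the function
`H(x,y) = (√(x²+y²) − x)^{1−s}` satisfies
`∂²ₓH + ∂²_yH − (a/y) ∂_yH = 0` on the upper half-plane, i.e. `L₋ₐ H = 0`. -/
theorem H_La_harmonic (s : ℝ) (hs : 0 < s) (hs1 : s < 1) (a : ℝ)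
    (ha : a = 1 - 2 * s) :
    ∀ x y : ℝ, 0 < y →
      deriv (deriv (fun t : ℝ => H s t y)) x + deriv (deriv (fun t : ℝ => H s x t)) y
        - (a / y) * deriv (fun t : ℝ => H s x t) y = 0 := by
  intro x y hy
  have h0 : 0 < x ^ 2 + y ^ 2 := sqrt_pos' x y hy.ne'
  have hr : 0 < Real.sqrt (x ^ 2 + y ^ 2) := Real.sqrt_pos.mpr h0
  have hg : 0 < Real.sqrt (x ^ 2 + y ^ 2) - x := sqrt_sub_pos' x y hy.ne'
  have hDx : deriv (fun t : ℝ => H s t y) = fun t : ℝ =>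
      (1 - s) * ((Real.sqrt (t ^ 2 + y ^ 2) - t) ^ (-s) *
        (t / Real.sqrt (t ^ 2 + y ^ 2) - 1)) :=
    funext fun t => (hasDerivAt_H_x s y hy t).deriv
  have hxx := (hasDerivAt_Fx s y hy x).deriv
  have hDy : deriv (fun t : ℝ => H s x t) =ᶠ[nhds y] fun u : ℝ =>
      (1 - s) * ((Real.sqrt (x ^ 2 + u ^ 2) - x) ^ (-s) *
        (u / Real.sqrt (x ^ 2 + u ^ 2))) := by
    filter_upwards [Ioi_mem_nhds hy] with u hu
    exact (hasDerivAt_H_y s x u hu).deriv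
  have hyy := (hasDerivAt_Fy s x y hy).deriv
  have hy1 := (hasDerivAt_H_y s x y hy).deriv
  rw [hDx, hxx, hDy.deriv_eq, hyy, hy1]
  have hPQ : (Real.sqrt (x ^ 2 + y ^ 2) - x) ^ (-s - 1) * (Real.sqrt (x ^ 2 + y ^ 2) - x)
      = (Real.sqrt (x ^ 2 + y ^ 2) - x) ^ (-s) := by
    have h := Real.rpow_add hg (-s - 1) 1
    rw [Real.rpow_one] at h
    have he : -s - 1 + 1 = -s := by ring
    rw [he] at h
    exact h.symm
  have hrsq : Real.sqrt (x ^ 2 + y ^ 2) ^ 2 = x ^ 2 + y ^ 2 := Real.sq_sqrt h0.le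
  exact final_alg s a ((Real.sqrt (x ^ 2 + y ^ 2) - x) ^ (-s))
    ((Real.sqrt (x ^ 2 + y ^ 2) - x) ^ (-s - 1)) (Real.sqrt (x ^ 2 + y ^ 2)) x y
    hr hy hg hPQ hrsq ha
end
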